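/- arXiv:0802.4434 — 3 statements merged into one kernel-verified Lean document; each statement's English description precedes it below -/
import Mathlib

section
/- The function ψ(s,t) = 2y(s,t)s + [ln ρ - st](z(s,t) - 1) + ln ρ, where y(s,t) = (1/s²)[μ(e^{st}-st-1) + λ(1-st-e^{-st})] and z(s,t) = (1/s)[μ(e^{st}-1) + λ(e^{-st}-1)] + 1 and ρ = λ/μ, satisfies the characteristic equation ∂ψ/∂t = p(z-1) + q(λe^{-q} - μe^{q}) with p = s and q = ln ρ - st, and ψ(s,0) = ln ρ. -/
theorem psi_characteristic_equation (lam mu s : ℝ)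
    (hlam : 0 < lam) (hmu : lam < mu) (hs : s ≠ 0)
    (ρ : ℝ) (hρ : ρ = lam / mu)
    (y z ψ p q : ℝ → ℝ)
    (hy : ∀ t, y t = (1 / s ^ 2) * (mu * (Real.exp (s * t) - s * t - 1)
        + lam * (1 - s * t - Real.exp (-(s * t)))))
    (hz : ∀ t, z t = (1 / s) * (mu * (Real.exp (s * t) - 1) + lam * (Real.exp (-(s * t)) - 1)) + 1)
    (hψ : ∀ t, ψ t = 2 * y t * s + (Real.log ρ - s * t) * (z t - 1) + Real.log ρ)
    (hp : ∀ t, p t = s)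
    (hq : ∀ t, q t = Real.log ρ - s * t) :
    (∀ t, HasDerivAt ψ (p t * (z t - 1)
        + q t * (lam * Real.exp (-(q t)) - mu * Real.exp (q t))) t) ∧
    ψ 0 = Real.log ρ := by
  have hmupos : (0:ℝ) < mu := hlam.trans hmu
  have hρpos : 0 < ρ := by rw [hρ]; positivity
  have hlam0 : lam ≠ 0 := ne_of_gt hlam
  have hmu0 : mu ≠ 0 := ne_of_gt hmupos
  constructor
  · intro t
    have hfun : ψ = fun u => 2 * ((1 / s ^ 2) * (mu * (Real.exp (s * u) - s * u - 1)
        + lam * (1 - s * u - Real.exp (-(s * u))))) * s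
        + (Real.log ρ - s * u) *
          ((1 / s) * (mu * (Real.exp (s * u) - 1) + lam * (Real.exp (-(s * u)) - 1)) + 1 - 1)
        + Real.log ρ := by
      funext u; rw [hψ, hy, hz]
    have hid : HasDerivAt (fun u : ℝ => s * u) s t := by
      simpa using (hasDerivAt_id t).const_mul s
    have hE : HasDerivAt (fun u : ℝ => Real.exp (s * u)) (Real.exp (s * t) * s) t :=
      (Real.hasDerivAt_exp (s * t)).comp t hid
    have hEm : HasDerivAt (fun u : ℝ => Real.exp (-(s * u))) (Real.exp (-(s * t)) * (-s)) t :=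
      by have h := (Real.hasDerivAt_exp (-(s * t))).comp t hid.neg; exact h
    have hY : HasDerivAt (fun u : ℝ => 2 * ((1 / s ^ 2) * (mu * (Real.exp (s * u) - s * u - 1)
        + lam * (1 - s * u - Real.exp (-(s * u))))) * s)
        (2 * ((1 / s ^ 2) * (mu * (Real.exp (s * t) * s - s)
        + lam * (0 - s - Real.exp (-(s * t)) * (-s)))) * s) t := by
      exact (((((hE.sub hid).sub_const 1).const_mul mu).add
        ((((hasDerivAt_const t (1:ℝ)).sub hid).sub hEm).const_mul lam)).const_mul
        (1 / s ^ 2)).const_mul 2 |>.mul_const s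
    have hZ : HasDerivAt (fun u : ℝ => (1 / s) * (mu * (Real.exp (s * u) - 1)
        + lam * (Real.exp (-(s * u)) - 1)) + 1 - 1)
        ((1 / s) * (mu * (Real.exp (s * t) * s) + lam * (Real.exp (-(s * t)) * (-s)))) t := by
      exact ((((hE.sub_const 1).const_mul mu).add
        ((hEm.sub_const 1).const_mul lam)).const_mul (1 / s)).add_const 1 |>.sub_const 1
    have hL : HasDerivAt (fun u : ℝ => Real.log ρ - s * u) (0 - s) t :=
      (hasDerivAt_const t (Real.log ρ)).sub hid
    have hD := (hY.add ((hL.mul hZ))).add_const (Real.log ρ)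
    rw [hfun]
    convert hD using 1
    case e'_4 => rfl
    case e'_5 => rfl
    case e'_8 => rfl
    have e1 : Real.exp (-(Real.log ρ - s * t)) = Real.exp (s * t) * (mu / lam) := by
      rw [neg_sub, Real.exp_sub, Real.exp_log hρpos, hρ]
      field_simp
    have e2 : Real.exp (Real.log ρ - s * t) = (lam / mu) * Real.exp (-(s * t)) := by
      rw [Real.exp_sub, Real.exp_log hρpos, hρ, Real.exp_neg]
      field_simp
    rw [hp, hq, hz, e1, e2]
    field_simp
    ring
  · rw [hψ, hy, hz]
    simp
end

section
/- For the rays y(s,t), z(s,t) defined by y = (1/s²)[μ(e^{st}-st-1) + λ(1-st-e^{-st})], z = (1/s)[μ(e^{st}-1) + λ(e^{-st}-1)] + 1, the Jacobian J(s,t) = y_t z_s - y_s z_t equals (1/s)[2 z_t y - (z-1)²], where z_t = μe^{st} - λe^{-st}. -/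
theorem jacobian_formula (lam mu : ℝ) (hlam : 0 < lam) (hmu : 0 < mu)
    (y z : ℝ → ℝ → ℝ)
    (hy : ∀ s t, y s t = (1 / s ^ 2) * (mu * (Real.exp (s * t) - s * t - 1)
        + lam * (1 - s * t - Real.exp (-(s * t)))))
    (hz : ∀ s t, z s t = (1 / s) * (mu * (Real.exp (s * t) - 1)
        + lam * (Real.exp (-(s * t)) - 1)) + 1)
    (s t : ℝ) (hs : s ≠ 0) (ht : 0 < t) :
    deriv (fun τ => y s τ) t * deriv (fun σ => z σ t) s
      - deriv (fun σ => y σ t) s * deriv (fun τ => z s τ) t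
    = (1 / s) * (2 * (mu * Real.exp (s * t) - lam * Real.exp (-(s * t))) * y s t
        - (z s t - 1) ^ 2) ∧
    deriv (fun τ => z s τ) t = mu * Real.exp (s * t) - lam * Real.exp (-(s * t)) := by
  have hs2 : (s : ℝ) ^ 2 ≠ 0 := pow_ne_zero 2 hs
  -- derivative of τ ↦ s*τ at t
  have hst : HasDerivAt (fun τ : ℝ => s * τ) s t := by
    simpa using (hasDerivAt_id t).const_mul s
  have hest : HasDerivAt (fun τ : ℝ => Real.exp (s * τ)) (Real.exp (s * t) * s) t :=
    hst.exp
  have hnest : HasDerivAt (fun τ : ℝ => Real.exp (-(s * τ)))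
      (Real.exp (-(s * t)) * (-s)) t := by
    simpa using hst.neg.exp
  -- derivative of σ ↦ σ*t at s
  have hts : HasDerivAt (fun σ : ℝ => σ * t) t s := by
    simpa using (hasDerivAt_id s).mul_const t
  have hets : HasDerivAt (fun σ : ℝ => Real.exp (σ * t)) (Real.exp (s * t) * t) s :=
    hts.exp
  have hnets : HasDerivAt (fun σ : ℝ => Real.exp (-(σ * t)))
      (Real.exp (-(s * t)) * (-t)) s := by
    simpa using hts.neg.exp
  -- y_t
  have hyt : HasDerivAt (fun τ => y s τ)
      ((1 / s ^ 2) * ((mu * (Real.exp (s * t) * s - s))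
        + lam * (-s - Real.exp (-(s * t)) * (-s)))) t := by
    have h : HasDerivAt (fun τ : ℝ => (1 / s ^ 2) * (mu * (Real.exp (s * τ) - s * τ - 1)
        + lam * (1 - s * τ - Real.exp (-(s * τ)))))
        ((1 / s ^ 2) * ((mu * (Real.exp (s * t) * s - s))
        + lam * (-s - Real.exp (-(s * t)) * (-s)))) t := by
      have := (((hest.sub hst).sub_const 1).const_mul mu).add
        ((((hasDerivAt_const t (1:ℝ)).sub hst).sub hnest).const_mul lam)
      have h2 := this.const_mul (1 / s ^ 2)
      exact h2.congr_deriv (by ring)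
    have hfun : (fun τ => y s τ) = (fun τ : ℝ => (1 / s ^ 2) * (mu * (Real.exp (s * τ) - s * τ - 1)
        + lam * (1 - s * τ - Real.exp (-(s * τ))))) := by
      funext τ; exact hy s τ
    rw [hfun]; exact h
  -- z_t
  have hzt : HasDerivAt (fun τ => z s τ)
      ((1 / s) * (mu * (Real.exp (s * t) * s) + lam * (Real.exp (-(s * t)) * (-s)))) t := by
    have h := ((((hest.sub_const 1).const_mul mu).add
        ((hnest.sub_const 1).const_mul lam)).const_mul (1 / s)).add_const 1
    have hfun : (fun τ => z s τ) = (fun τ : ℝ => (1 / s) * (mu * (Real.exp (s * τ) - 1)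
        + lam * (Real.exp (-(s * τ)) - 1)) + 1) := by
      funext τ; exact hz s τ
    rw [hfun]; exact h
  -- y_s : write as quotient A σ / σ^2
  have hA : HasDerivAt (fun σ : ℝ => mu * (Real.exp (σ * t) - σ * t - 1)
      + lam * (1 - σ * t - Real.exp (-(σ * t))))
      (mu * (Real.exp (s * t) * t - t) + lam * (-t - Real.exp (-(s * t)) * (-t))) s := by
    have := (((hets.sub hts).sub_const 1).const_mul mu).add
      ((((hasDerivAt_const s (1:ℝ)).sub hts).sub hnets).const_mul lam)
    exact this.congr_deriv (by ring)
  have hpow : HasDerivAt (fun σ : ℝ => σ ^ 2) (2 * s) s := by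
    simpa using hasDerivAt_pow 2 s
  have hys : HasDerivAt (fun σ => y σ t)
      (((mu * (Real.exp (s * t) * t - t) + lam * (-t - Real.exp (-(s * t)) * (-t))) * s ^ 2
        - (mu * (Real.exp (s * t) - s * t - 1)
        + lam * (1 - s * t - Real.exp (-(s * t)))) * (2 * s)) / (s ^ 2) ^ 2) s := by
    have h := hA.div hpow hs2
    have hfun : (fun σ => y σ t) = (fun σ : ℝ => (mu * (Real.exp (σ * t) - σ * t - 1)
        + lam * (1 - σ * t - Real.exp (-(σ * t)))) / σ ^ 2) := by
      funext σ; rw [hy σ t]; ring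
    rw [hfun]; exact h
  -- z_s
  have hB : HasDerivAt (fun σ : ℝ => mu * (Real.exp (σ * t) - 1)
      + lam * (Real.exp (-(σ * t)) - 1))
      (mu * (Real.exp (s * t) * t) + lam * (Real.exp (-(s * t)) * (-t))) s := by
    have := ((hets.sub_const 1).const_mul mu).add ((hnets.sub_const 1).const_mul lam)
    exact this
  have hid : HasDerivAt (fun σ : ℝ => σ) 1 s := hasDerivAt_id s
  have hzs : HasDerivAt (fun σ => z σ t)
      (((mu * (Real.exp (s * t) * t) + lam * (Real.exp (-(s * t)) * (-t))) * s
        - (mu * (Real.exp (s * t) - 1) + lam * (Real.exp (-(s * t)) - 1)) * 1) / s ^ 2) s := by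
    have h := (hB.div hid hs).add_const 1
    have hfun : (fun σ => z σ t) = (fun σ : ℝ => (mu * (Real.exp (σ * t) - 1)
        + lam * (Real.exp (-(σ * t)) - 1)) / σ + 1) := by
      funext σ; rw [hz σ t]; ring
    rw [hfun]; exact h
  rw [hyt.deriv, hzt.deriv, hys.deriv, hzs.deriv, hy s t, hz s t]
  constructor
  · field_simp
    ring
  · field_simp
    ring
end

section
/- For A, B, C > 0 with Δ = √(B²-4AC) > 0 and r = (B-Δ)/(2A), the function Φ_l(x) = e^{θx}(C/A)^{l/2} J_{l-α+B/θ}(β/θ) with β = 2√(AC) satisfies the differential-difference equation (l-α)Φ_l'(x) = AΦ_{l+1}(x) + CΦ_{l-1}(x) - BΦ_l(x) for every x ∈ ℝ, every integer l, every nonzero θ, and every α ∈ (0,1). -/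
/-- Bessel function of the first kind of real order `ν`, via its power series
(using `Real.rpow` for the factor `(x/2)^ν`). -/
noncomputable def besselJ (ν x : ℝ) : ℝ :=
  ∑' m : ℕ, ((-1 : ℝ) ^ m / ((m.factorial : ℝ) * Real.Gamma (ν + m + 1)))
    * (x / 2) ^ (2 * (m : ℝ) + ν)

/-- coefficient in the Bessel series -/
noncomputable def besselA (ν : ℝ) (m : ℕ) : ℝ :=
  (-1 : ℝ) ^ m / ((m.factorial : ℝ) * Real.Gamma (ν + m + 1))

lemma besselJ_eq (ν x : ℝ) :
    besselJ ν x = ∑' m : ℕ, besselA ν m * (x / 2) ^ (2 * (m : ℝ) + ν) := rfl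

/-- key Gamma identity, valid for all real `t` thanks to junk values -/
lemma gamma_key (t : ℝ) : t / Real.Gamma (t + 1) = 1 / Real.Gamma t := by
  rcases eq_or_ne t 0 with rfl | ht
  · simp [Real.Gamma_zero]
  · rw [Real.Gamma_add_one ht]
    rw [show t / (t * Real.Gamma t) = t * 1 / (t * Real.Gamma t) by ring,
      mul_div_mul_left _ _ ht]

lemma besselA_ident (ν : ℝ) (m : ℕ) :
    ν * besselA ν (m + 1) - besselA (ν - 1) (m + 1) = besselA (ν + 1) m := by
  have key := gamma_key (ν + m + 1)
  unfold besselA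
  have h1 : (ν - 1 + ↑(m + 1) + 1 : ℝ) = ν + m + 1 := by push_cast; ring
  have h2 : (ν + ↑(m + 1) + 1 : ℝ) = (ν + m + 1) + 1 := by push_cast; ring
  have h3 : (ν + 1 + ↑m + 1 : ℝ) = (ν + m + 1) + 1 := by push_cast; ring
  rw [h1, h2, h3]
  set G1 : ℝ := Real.Gamma ((ν + m + 1) + 1)
  set G0 : ℝ := Real.Gamma (ν + m + 1)
  have key' : G0⁻¹ = (ν + m + 1) * G1⁻¹ := by
    rw [div_eq_mul_inv, div_eq_mul_inv, one_mul] at key; exact key.symm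
  have hm1 : ((m : ℝ) + 1) ≠ 0 := by positivity
  have hfacinv : (((m + 1).factorial : ℝ))⁻¹ = ((m : ℝ) + 1)⁻¹ * ((m.factorial : ℝ))⁻¹ := by
    rw [Nat.factorial_succ, show (((m+1) * m.factorial : ℕ) : ℝ) = ((m:ℝ)+1) * m.factorial by
      push_cast; ring, mul_inv]
  have hinv : ((m : ℝ) + 1)⁻¹ * ((m : ℝ) + 1) = 1 := inv_mul_cancel₀ hm1
  simp only [div_eq_mul_inv, mul_inv]
  rw [hfacinv, key', pow_succ]
  linear_combination ((-1:ℝ) ^ m * ((m.factorial : ℝ))⁻¹ * G1⁻¹) * hinv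

lemma besselA_ident0 (ν : ℝ) : ν * besselA ν 0 = besselA (ν - 1) 0 := by
  have key := gamma_key ν
  unfold besselA
  simp only [pow_zero, Nat.factorial_zero, Nat.cast_one, Nat.cast_zero, one_mul]
  rw [show (ν + 0 + 1 : ℝ) = ν + 1 by ring, show (ν - 1 + 0 + 1 : ℝ) = ν by ring]
  rw [mul_one_div, key]

lemma besselJ_summand_summable (ν x : ℝ) (hx : x ≠ 0) :
    Summable (fun m : ℕ => besselA ν m * (x / 2) ^ (2 * (m : ℝ) + ν)) := by
  set z : ℝ := x / 2 with hzdef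
  have hz : z ≠ 0 := div_ne_zero hx two_ne_zero
  have hzabs : 0 < |z| := abs_pos.2 hz
  set M : ℕ := ⌈1 - ν⌉₊ with hM
  rw [← summable_nat_add_iff M]
  have hmaj : Summable (fun n : ℕ => |z| ^ ν * ((|z| ^ (2:ℕ)) ^ (n + M) / (n + M).factorial)) :=
    (summable_nat_add_iff (f := fun k : ℕ => |z| ^ ν * ((|z| ^ (2:ℕ)) ^ k / k.factorial)) M).2
      ((Real.summable_pow_div_factorial (|z| ^ (2:ℕ))).mul_left _)
  apply Summable.of_norm_bounded hmaj
  intro n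
  set m : ℕ := n + M with hm
  have hM' : (1 : ℝ) - ν ≤ M := Nat.le_ceil _
  have hge2 : (2 : ℝ) ≤ ν + m + 1 := by
    have : (M : ℝ) ≤ m := by exact_mod_cast Nat.le_add_left M n
    linarith
  have hG1 : 1 ≤ Real.Gamma (ν + m + 1) := by
    have h2 : Real.Gamma 2 = 1 := by
      rw [show (2:ℝ) = 1 + 1 by norm_num, Real.Gamma_add_one one_ne_zero,
        Real.Gamma_one, mul_one]
    have hmono : Real.Gamma 2 ≤ Real.Gamma (ν + m + 1) :=
      Real.Gamma_strictMonoOn_Ici.monotoneOn (by norm_num) hge2 hge2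
    linarith
  have hGpos : 0 < Real.Gamma (ν + m + 1) := lt_of_lt_of_le one_pos hG1
  have hmf : (0:ℝ) < (m.factorial : ℝ) := by exact_mod_cast m.factorial_pos
  have habs : ‖besselA ν m * z ^ (2 * (m : ℝ) + ν)‖
      ≤ (1 / (m.factorial : ℝ)) * (|z| ^ (2 * (m : ℝ) + ν)) := by
    rw [norm_mul]
    apply mul_le_mul
    · rw [Real.norm_eq_abs]
      unfold besselA
      rw [abs_div, abs_pow, abs_neg, abs_one, one_pow, abs_mul,
        Nat.abs_cast, abs_of_pos hGpos]
      apply div_le_div_of_nonneg_left one_pos.le hmf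
      nlinarith
    · rw [Real.norm_eq_abs]; exact Real.abs_rpow_le_abs_rpow _ _
    · exact norm_nonneg _
    · positivity
  calc ‖besselA ν m * z ^ (2 * (m : ℝ) + ν)‖
      ≤ (1 / (m.factorial : ℝ)) * (|z| ^ (2 * (m : ℝ) + ν)) := habs
    _ = |z| ^ ν * ((|z| ^ (2:ℕ)) ^ m / m.factorial) := by
        rw [Real.rpow_add hzabs, show (2 * (m:ℝ)) = ((2 * m : ℕ) : ℝ) by push_cast; ring,
          Real.rpow_natCast, pow_mul]
        ring

lemma besselJ_recurrence (ν x : ℝ) (hx : x ≠ 0) :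
    x * besselJ (ν + 1) x + x * besselJ (ν - 1) x = 2 * ν * besselJ ν x := by
  set z : ℝ := x / 2 with hzdef
  have hz : z ≠ 0 := div_ne_zero hx two_ne_zero
  have hxz : x = 2 * z := by rw [hzdef]; ring
  have S : ∀ ν' : ℝ, Summable (fun m : ℕ => besselA ν' m * z ^ (2 * (m : ℝ) + ν')) :=
    fun ν' => besselJ_summand_summable ν' x hx
  set g : ℕ → ℝ := fun m => 2 * ν * (besselA ν m * z ^ (2 * (m : ℝ) + ν))
      - x * (besselA (ν - 1) m * z ^ (2 * (m : ℝ) + (ν - 1))) with hgdef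
  have hg0 : g 0 = 0 := by
    have e1 : (2 * ((0:ℕ):ℝ) + ν) = (2 * ((0:ℕ):ℝ) + (ν - 1)) + 1 := by push_cast; ring
    have key := besselA_ident0 ν
    simp only [hgdef, hxz, e1, Real.rpow_add_one hz]
    linear_combination (2 * z * z ^ (2 * ((0:ℕ):ℝ) + (ν - 1))) * key
  have hgsucc : ∀ m : ℕ, g (m + 1) = x * (besselA (ν + 1) m * z ^ (2 * (m : ℝ) + (ν + 1))) := by
    intro m
    have key := besselA_ident ν m
    have e1 : (2 * ((m+1:ℕ):ℝ) + ν) = (2 * ((m:ℕ):ℝ) + (ν + 1)) + 1 := by push_cast; ring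
    have e2 : (2 * ((m+1:ℕ):ℝ) + (ν - 1)) = (2 * ((m:ℕ):ℝ) + (ν + 1)) := by push_cast; ring
    simp only [hgdef, hxz, e1, e2, Real.rpow_add_one hz]
    linear_combination (2 * z * z ^ (2 * ((m:ℕ):ℝ) + (ν + 1))) * key
  have hSg : Summable g := ((S ν).mul_left _).sub ((S (ν - 1)).mul_left _)
  have h1 : 2 * ν * besselJ ν x - x * besselJ (ν - 1) x = ∑' m, g m := by
    rw [besselJ_eq, besselJ_eq, ← hzdef, ← tsum_mul_left, ← tsum_mul_left]
    exact (Summable.tsum_sub ((S ν).mul_left _) ((S (ν-1)).mul_left _)).symm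
  have h2 : (∑' m, g m) = x * besselJ (ν + 1) x := by
    rw [Summable.tsum_eq_zero_add hSg, hg0, zero_add]
    simp only [hgsucc]
    rw [tsum_mul_left, besselJ_eq, ← hzdef]
  linarith [h1, h2.symm]

theorem separable_solution_satisfies_dde (A B C α θ : ℝ)
    (hA : 0 < A) (hB : 0 < B) (hC : 0 < C)
    (hΔ : 0 < Real.sqrt (B ^ 2 - 4 * A * C)) (hθ : θ ≠ 0) (hα0 : 0 < α) (hα1 : α < 1)
    (β : ℝ) (hβ : β = 2 * Real.sqrt (A * C))
    (Φ : ℤ → ℝ → ℝ)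
    (hΦ : ∀ (l : ℤ) (x : ℝ), Φ l x
        = Real.exp (θ * x) * (C / A) ^ ((l : ℝ) / 2) * besselJ ((l : ℝ) - α + B / θ) (β / θ)) :
    ∀ (l : ℤ) (x : ℝ),
      ((l : ℝ) - α) * deriv (Φ l) x = A * Φ (l + 1) x + C * Φ (l - 1) x - B * Φ l x := by
  intro l x
  set ν : ℝ := (l : ℝ) - α + B / θ with hν
  set z : ℝ := β / θ with hz
  have hsqAC : 0 < Real.sqrt (A * C) := Real.sqrt_pos.2 (by positivity)
  have hβpos : 0 < β := by rw [hβ]; positivity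
  have hzne : z ≠ 0 := div_ne_zero (ne_of_gt hβpos) hθ
  -- the derivative
  have hderiv : deriv (Φ l) x = θ * Φ l x := by
    have hfun : Φ l = fun y => Real.exp (θ * y) *
        ((C / A) ^ ((l : ℝ) / 2) * besselJ ((l : ℝ) - α + B / θ) z) := by
      funext y; rw [hΦ l y]; ring
    rw [hfun]
    have h0 : HasDerivAt (fun y : ℝ => θ * y) θ x := by
      simpa using (hasDerivAt_id x).const_mul θ
    have hd := (h0.exp.mul_const ((C / A) ^ ((l : ℝ) / 2) * besselJ ((l : ℝ) - α + B / θ) z))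
    rw [hd.deriv]; ring
  rw [hderiv, hΦ l x, hΦ (l+1) x, hΦ (l-1) x]
  have hl1 : ((l + 1 : ℤ) : ℝ) = (l : ℝ) + 1 := by push_cast; ring
  have hl2 : ((l - 1 : ℤ) : ℝ) = (l : ℝ) - 1 := by push_cast; ring
  rw [hl1, hl2]
  have hν1 : (l : ℝ) + 1 - α + B / θ = ν + 1 := by rw [hν]; ring
  have hν2 : (l : ℝ) - 1 - α + B / θ = ν - 1 := by rw [hν]; ring
  rw [hν1, hν2, ← hν]
  -- rpow splitting
  have hCA : (0:ℝ) < C / A := by positivity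
  set s : ℝ := Real.sqrt (C / A) with hs
  set sAC : ℝ := Real.sqrt (A * C) with hsac
  set P : ℝ := (C / A) ^ ((l : ℝ) / 2) with hP
  have hr1 : (C / A) ^ (((l : ℝ) + 1) / 2) = P * s := by
    rw [hP, hs, Real.sqrt_eq_rpow, ← Real.rpow_add hCA]; ring_nf
  have hr2 : (C / A) ^ (((l : ℝ) - 1) / 2) * s = P := by
    rw [hP, hs, Real.sqrt_eq_rpow, ← Real.rpow_add hCA]; ring_nf
  have hsA : 0 < Real.sqrt A := Real.sqrt_pos.2 hA
  have hsC : 0 < Real.sqrt C := Real.sqrt_pos.2 hC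
  have hsCA : s = Real.sqrt C / Real.sqrt A := by rw [hs, Real.sqrt_div hC.le]
  have hsACm : sAC = Real.sqrt A * Real.sqrt C := by rw [hsac, Real.sqrt_mul hA.le]
  have hAA : Real.sqrt A * Real.sqrt A = A := Real.mul_self_sqrt hA.le
  have hCC : Real.sqrt C * Real.sqrt C = C := Real.mul_self_sqrt hC.le
  have hAs : A * s = sAC := by
    rw [hsCA, hsACm]
    field_simp
    linear_combination (-1 : ℝ) * hAA
  have hCs : sAC * s = C := by
    rw [hsCA, hsACm, div_eq_mul_inv]
    calc Real.sqrt A * Real.sqrt C * (Real.sqrt C * (Real.sqrt A)⁻¹)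
        = (Real.sqrt C * Real.sqrt C) * (Real.sqrt A * (Real.sqrt A)⁻¹) := by ring
      _ = C := by rw [hCC, mul_inv_cancel₀ hsA.ne', mul_one]
  set Q : ℝ := (C / A) ^ (((l : ℝ) - 1) / 2) with hQ
  have hCQ : C * Q = P * sAC := by
    calc C * Q = (sAC * s) * Q := by rw [hCs]
      _ = sAC * (Q * s) := by ring
      _ = P * sAC := by rw [hr2]; ring
  -- Bessel recurrence at z
  have hrec := besselJ_recurrence ν z hzne
  have hz2 : θ * z = 2 * sAC := by
    rw [hz, hβ, hsac]; field_simp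
  have hrec2 : sAC * besselJ (ν + 1) z + sAC * besselJ (ν - 1) z = θ * ν * besselJ ν z := by
    linear_combination (θ / 2) * hrec
      - ((besselJ (ν + 1) z + besselJ (ν - 1) z) / 2) * hz2
  have hBθ : θ * (B / θ) = B := mul_div_cancel₀ B hθ
  rw [hr1]
  set E : ℝ := Real.exp (θ * x) with hE
  linear_combination (-(E * P * besselJ (ν + 1) z)) * hAs + (-(E * besselJ (ν - 1) z)) * hCQ
    + (-(E * P)) * hrec2 + (-(θ * E * P * besselJ ν z)) * hν + (-(E * P * besselJ ν z)) * hBθ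
end
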